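/- Let μ > 0 and λ > 0, and define for real symmetric 2×2 matrices Q with det Q > 0 the membrane energy density W_mem(Q) = (μ/2)·tr Q + (λ/4)·det Q − ((2μ+λ)/4)·log det Q − μ − λ/4. Then for every real symmetric 2×2 matrix A, the second derivative at t = 0 of the function t ↦ W_mem(I + t·A) equals (λ/2)·det A + ((2μ+λ)/4)·tr(A²), and this quantity is strictly positive whenever A ≠ 0; i.e., the second derivative of W_mem at the identity is a positive-definite quadratic form on symmetric matrices. -/

import Mathlib

set_option maxHeartbeats 1000000 in
/-- The second derivative of the membrane energy density at the identity in a
symmetric direction `A` equals `(λ/2) det A + ((2μ+λ)/4) tr(A²)`, and this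
quadratic form is positive definite on symmetric matrices. -/
theorem membrane_density_second_derivative_pos_def
    (μ lam : ℝ) (hμ : 0 < μ) (hlam : 0 < lam) :
    let W : Matrix (Fin 2) (Fin 2) ℝ → ℝ := fun Q =>
      μ / 2 * Q.trace + lam / 4 * Q.det -
        (2 * μ + lam) / 4 * Real.log Q.det - μ - lam / 4
    ∀ A : Matrix (Fin 2) (Fin 2) ℝ, A.IsSymm →
      iteratedDeriv 2 (fun t : ℝ => W (1 + t • A)) 0 =
          lam / 2 * A.det + (2 * μ + lam) / 4 * (A * A).trace ∧
        (A ≠ 0 → 0 < lam / 2 * A.det + (2 * μ + lam) / 4 * (A * A).trace) := by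
  intro W A hA
  set a := A 0 0 with ha
  set x := A 0 1 with hx
  set y := A 1 0 with hy
  set e := A 1 1 with he
  have hxy : y = x := by
    have := congrFun (congrFun hA 0) 1
    simpa [Matrix.transpose_apply] using this
  set b := A.trace with hb
  set d := A.det with hd
  set c := (2 * μ + lam) / 4 with hc
  have hbv : b = a + e := by
    rw [hb, Matrix.trace_fin_two]
  have hdv : d = a * e - x * y := by
    rw [hd, Matrix.det_fin_two]
  have htr2 : (A * A).trace = a * a + x * y + (y * x + e * e) := by
    simp [Matrix.trace_fin_two, Matrix.mul_apply, Fin.sum_univ_two, ← ha, ← hx, ← hy, ← he]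
  have key : iteratedDeriv 2 (fun t : ℝ => W (1 + t • A)) 0
      = lam / 2 * d - c * (2 * d - b ^ 2) := by
    have hW : (fun t : ℝ => W (1 + t • A))
        = fun t => μ / 2 * (2 + b * t) + lam / 4 * (1 + b * t + d * t ^ 2)
            - c * Real.log (1 + b * t + d * t ^ 2) - μ - lam / 4 := by
      funext t
      have htr : (1 + t • A).trace = 2 + b * t := by
        simp [Matrix.trace_fin_two, Matrix.add_apply, Matrix.one_apply,
          Matrix.smul_apply, hbv, ← ha, ← he]
        ring
      have hdet : (1 + t • A).det = 1 + b * t + d * t ^ 2 := by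
        simp [Matrix.det_fin_two, Matrix.add_apply, Matrix.one_apply,
          Matrix.smul_apply, ← ha, ← hx, ← hy, ← he, hbv, hdv]
        ring
      simp only [W, htr, hdet, hc]
    rw [hW]
    have hp : ∀ t : ℝ, HasDerivAt (fun t : ℝ => 1 + b * t + d * t ^ 2)
        (b + 2 * d * t) t := by
      intro t
      have h1 : HasDerivAt (fun t : ℝ => b * t) b t := by
        simpa using (hasDerivAt_id t).const_mul b
      have h2 : HasDerivAt (fun t : ℝ => d * t ^ 2) (2 * d * t) t := by
        have := (hasDerivAt_pow 2 t).const_mul d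
        exact this.congr_deriv (by norm_num; ring)
      have := (h1.const_add (1 : ℝ)).add h2
      exact this
    have hg : ∀ t : ℝ, (0 : ℝ) < 1 + b * t + d * t ^ 2 →
        HasDerivAt (fun t => μ / 2 * (2 + b * t) + lam / 4 * (1 + b * t + d * t ^ 2)
            - c * Real.log (1 + b * t + d * t ^ 2) - μ - lam / 4)
          (μ / 2 * b + lam / 4 * (b + 2 * d * t)
            - c * ((b + 2 * d * t) / (1 + b * t + d * t ^ 2))) t := by
      intro t ht
      have h1 : HasDerivAt (fun t : ℝ => μ / 2 * (2 + b * t)) (μ / 2 * b) t := by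
        have h0 : HasDerivAt (fun t : ℝ => 2 + b * t) b t := by
          simpa using ((hasDerivAt_id t).const_mul b).const_add (2 : ℝ)
        simpa using h0.const_mul (μ / 2)
      have h2 := (hp t).const_mul (lam / 4)
      have h3 := ((hp t).log (ne_of_gt ht)).const_mul c
      exact (((h1.add h2).sub h3).sub_const μ).sub_const (lam / 4)
    have hU : ∀ᶠ t in nhds (0 : ℝ), (0 : ℝ) < 1 + b * t + d * t ^ 2 := by
      have hcont : Continuous fun t : ℝ => 1 + b * t + d * t ^ 2 := by continuity
      have h0 : (0 : ℝ) < 1 + b * 0 + d * 0 ^ 2 := by norm_num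
      exact (hcont.tendsto 0).eventually (eventually_gt_nhds h0)
    rw [iteratedDeriv_succ, iteratedDeriv_one]
    have hderiv : deriv (fun t => μ / 2 * (2 + b * t) + lam / 4 * (1 + b * t + d * t ^ 2)
            - c * Real.log (1 + b * t + d * t ^ 2) - μ - lam / 4)
        =ᶠ[nhds (0 : ℝ)] fun t => μ / 2 * b + lam / 4 * (b + 2 * d * t)
            - c * ((b + 2 * d * t) / (1 + b * t + d * t ^ 2)) :=
      hU.mono fun t ht => (hg t ht).deriv
    rw [hderiv.deriv_eq]
    have hnum : HasDerivAt (fun t : ℝ => b + 2 * d * t) (2 * d) (0 : ℝ) := by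
      simpa using ((hasDerivAt_id (0 : ℝ)).const_mul (2 * d)).const_add b
    have hden0 : (1 : ℝ) + b * 0 + d * 0 ^ 2 ≠ 0 := by norm_num
    have hdiv := (hnum.div (hp 0) hden0).const_mul c
    have hlin : HasDerivAt (fun t : ℝ => μ / 2 * b + lam / 4 * (b + 2 * d * t))
        (lam / 4 * (2 * d)) (0 : ℝ) := by
      simpa using (hnum.const_mul (lam / 4)).const_add (μ / 2 * b)
    have hq := hlin.sub hdiv
    rw [show deriv (fun t : ℝ => μ / 2 * b + lam / 4 * (b + 2 * d * t) - c * ((b + 2 * d * t) / (1 + b * t + d * t ^ 2))) 0 = _ from hq.deriv]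
    norm_num
    ring
  refine ⟨?_, ?_⟩
  · rw [key, htr2, hdv, hbv]
    ring
  · intro hA0
    have hne : a ≠ 0 ∨ x ≠ 0 ∨ e ≠ 0 := by
      by_contra h
      push_neg at h
      obtain ⟨h1, h2, h3⟩ := h
      apply hA0
      ext i j
      fin_cases i <;> fin_cases j <;>
        simp [← ha, ← hx, ← hy, ← he, h1, h2, h3, hxy] at *
    rw [htr2, hdv, hxy]
    have hqform : lam / 2 * (a * e - x * x) + c * (a * a + x * x + (x * x + e * e))
        = lam / 4 * (a + e) ^ 2 + μ / 2 * a ^ 2 + μ / 2 * e ^ 2 + μ * x ^ 2 := by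
      rw [hc]; ring
    rw [hqform]
    rcases hne with h | h | h
    · nlinarith [sq_nonneg (a + e), sq_nonneg e, sq_nonneg x, sq_pos_of_ne_zero h]
    · nlinarith [sq_nonneg (a + e), sq_nonneg a, sq_nonneg e, sq_pos_of_ne_zero h]
    · nlinarith [sq_nonneg (a + e), sq_nonneg a, sq_nonneg x, sq_pos_of_ne_zero h]
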